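/- Suppose y* ∈ ℝ⁴ and η ∈ ℝ satisfy the constrained critical point equation ∇H(y*) = η·∇H0(y*), where H = H0 + H2 + H4 is the truncated normal form Hamiltonian. Then the curve γ(t) = exp(η·t·J·S)·y* solves the Hamiltonian system γ′(t) = J·∇H(γ(t)) for all t ∈ ℝ; moreover, if η ≠ 0 then γ is periodic with period π/(|η|·Δ). (Chow–Kim: constrained critical points of the truncated normal form give exact relative periodic orbits.) -/

import Mathlib

/-- The gradient (vector of partial derivatives) of a function on ℝ⁴. -/
noncomputable def grad4 (f : (Fin 4 → ℝ) → ℝ) (y : Fin 4 → ℝ) : Fin 4 → ℝ :=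
  fun i => fderiv ℝ f y (Pi.single i 1)

/-- The standard symplectic matrix `J` in coordinates `(x₁, x₃, y₁, y₃)`. -/
def Jmat : Matrix (Fin 4) (Fin 4) ℝ :=
  !![0, 0, 1, 0; 0, 0, 0, 1; -1, 0, 0, 0; 0, -1, 0, 0]

/-- `S = diag(−2Δ, 2Δ, −2Δ, 2Δ)`, so that `∇H₀(y) = S y`. -/
def Smat (Δ : ℝ) : Matrix (Fin 4) (Fin 4) ℝ :=
  Matrix.diagonal ![-2 * Δ, 2 * Δ, -2 * Δ, 2 * Δ]

/-- `H₀ = −Δ|z₁|² + Δ|z₃|²`, with `z₁ = y₀ + i y₂`, `z₃ = y₁ + i y₃`. -/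
noncomputable def H0fun (Δ : ℝ) (y : Fin 4 → ℝ) : ℝ :=
  -Δ * ((y 0) ^ 2 + (y 2) ^ 2) + Δ * ((y 1) ^ 2 + (y 3) ^ 2)

/-- `H₂ = ε(|z₁|²+|z₃|²) + 2AN(z₁z₃ + conj z₁ conj z₃)`. -/
noncomputable def H2fun (ε A N : ℝ) (y : Fin 4 → ℝ) : ℝ :=
  ε * ((y 0) ^ 2 + (y 2) ^ 2 + (y 1) ^ 2 + (y 3) ^ 2)
    + 2 * A * N * (2 * (y 0 * y 1 - y 2 * y 3))

/-- `H₄ = A[(1/2)|z₁|⁴ − 2|z₁|²|z₃|² + (1/2)|z₃|⁴ − 2(|z₁|²+|z₃|²)(z₁z₃ + conj z₁ conj z₃)]`. -/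
noncomputable def H4fun (A : ℝ) (y : Fin 4 → ℝ) : ℝ :=
  A * ((1 / 2) * ((y 0) ^ 2 + (y 2) ^ 2) ^ 2
    - 2 * ((y 0) ^ 2 + (y 2) ^ 2) * ((y 1) ^ 2 + (y 3) ^ 2)
    + (1 / 2) * ((y 1) ^ 2 + (y 3) ^ 2) ^ 2
    - 2 * (((y 0) ^ 2 + (y 2) ^ 2) + ((y 1) ^ 2 + (y 3) ^ 2))
        * (2 * (y 0 * y 1 - y 2 * y 3)))

/- ### Auxiliary machinery -/

lemma MmatEq (Δ : ℝ) : Jmat * Smat Δ =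
    !![0, 0, -(2*Δ), 0; 0, 0, 0, 2*Δ; 2*Δ, 0, 0, 0; 0, -(2*Δ), 0, 0] := by
  ext i j
  fin_cases i <;> fin_cases j <;>
    simp [Jmat, Smat, Matrix.mul_apply, Fin.sum_univ_four, Matrix.diagonal,
      Matrix.vecHead, Matrix.vecTail]

lemma Msq (Δ : ℝ) : (Jmat * Smat Δ) * (Jmat * Smat Δ)
    = (-(2*Δ)^2) • (1 : Matrix (Fin 4) (Fin 4) ℝ) := by
  rw [MmatEq]
  ext i j
  fin_cases i <;> fin_cases j <;>
    simp [Matrix.mul_apply, Fin.sum_univ_four, Matrix.one_apply,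
      Matrix.vecHead, Matrix.vecTail] <;> ring

/-- The real algebra homomorphism `ℂ → Matrix (Fin 4) (Fin 4) ℝ` sending
`a + b i ↦ a • 1 + (b/(2Δ)) • (J S)`. -/
noncomputable def phiM (Δ : ℝ) (hΔ : Δ ≠ 0) : ℂ →ₐ[ℝ] Matrix (Fin 4) (Fin 4) ℝ where
  toFun z := z.re • (1 : Matrix (Fin 4) (Fin 4) ℝ) + (z.im / (2*Δ)) • (Jmat * Smat Δ)
  map_one' := by simp
  map_mul' z w := by
    simp only [Complex.mul_re, Complex.mul_im, add_mul, mul_add, Matrix.smul_mul,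
      Matrix.mul_smul, one_mul, mul_one, smul_smul, Msq Δ]
    match_scalars <;> field_simp <;> ring
  map_zero' := by simp
  map_add' z w := by
    simp only [Complex.add_re, Complex.add_im]
    match_scalars <;> ring
  commutes' r := by
    simp [Algebra.algebraMap_eq_smul_one]

lemma phiM_cont (Δ : ℝ) (hΔ : Δ ≠ 0) : Continuous (phiM Δ hΔ) := by
  show Continuous fun z : ℂ =>
    z.re • (1 : Matrix (Fin 4) (Fin 4) ℝ) + (z.im / (2*Δ)) • (Jmat * Smat Δ)
  fun_prop

/-- Explicit formula for the one-parameter rotation group generated by `J S`. -/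
lemma expM (Δ : ℝ) (hΔ : Δ ≠ 0) (θ : ℝ) :
    NormedSpace.exp (θ • (Jmat * Smat Δ)) =
      Real.cos (2*Δ*θ) • (1 : Matrix (Fin 4) (Fin 4) ℝ)
        + (Real.sin (2*Δ*θ) / (2*Δ)) • (Jmat * Smat Δ) := by
  letI : SeminormedRing (Matrix (Fin 4) (Fin 4) ℝ) := Matrix.linftyOpSemiNormedRing
  letI : NormedRing (Matrix (Fin 4) (Fin 4) ℝ) := Matrix.linftyOpNormedRing
  letI : NormedAlgebra ℝ (Matrix (Fin 4) (Fin 4) ℝ) := Matrix.linftyOpNormedAlgebra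
  have h1 : θ • (Jmat * Smat Δ) = phiM Δ hΔ (((2*Δ*θ : ℝ) : ℂ) * Complex.I) := by
    show _ = _ • (1 : Matrix (Fin 4) (Fin 4) ℝ) + _ • (Jmat * Smat Δ)
    rw [Complex.mul_re, Complex.mul_im]
    simp only [Complex.ofReal_re, Complex.ofReal_im, Complex.I_re, Complex.I_im]
    match_scalars
    all_goals field_simp
    all_goals ring
  rw [h1]
  erw [← NormedSpace.map_exp (phiM Δ hΔ) (phiM_cont Δ hΔ)]
  have h2 : NormedSpace.exp (((2*Δ*θ : ℝ) : ℂ) * Complex.I)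
      = Complex.exp (((2*Δ*θ : ℝ) : ℂ) * Complex.I) := by
    rw [Complex.exp_eq_exp_ℂ]
  rw [h2, Complex.exp_mul_I]
  show _ • (1 : Matrix (Fin 4) (Fin 4) ℝ) + _ • (Jmat * Smat Δ) = _
  congr 2
  · simp [← Complex.ofReal_ofNat, ← Complex.ofReal_mul, Complex.cos_ofReal_re,
      Complex.sin_ofReal_im]
  · simp [← Complex.ofReal_ofNat, ← Complex.ofReal_mul, Complex.cos_ofReal_im,
      Complex.sin_ofReal_re]

/-- Action of the rotation on a vector. -/
lemma Rvec (Δ : ℝ) (hΔ : Δ ≠ 0) (co si : ℝ) (y : Fin 4 → ℝ) :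
    (co • (1 : Matrix (Fin 4) (Fin 4) ℝ) + (si/(2*Δ)) • (Jmat * Smat Δ)).mulVec y =
    ![co * y 0 - si * y 2, co * y 1 + si * y 3, si * y 0 + co * y 2,
      -(si * y 1) + co * y 3] := by
  rw [MmatEq]
  funext i
  fin_cases i <;>
    simp [Matrix.mulVec, dotProduct, Fin.sum_univ_four, Matrix.one_apply,
      Matrix.vecHead, Matrix.vecTail] <;>
    field_simp <;> simp [sub_eq_add_neg]

lemma Jvec (v : Fin 4 → ℝ) : Jmat.mulVec v = ![v 2, v 3, -(v 0), -(v 1)] := by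
  funext i
  fin_cases i <;>
    simp [Jmat, Matrix.mulVec, dotProduct, Fin.sum_univ_four,
      Matrix.vecHead, Matrix.vecTail]

set_option maxHeartbeats 3000000 in
/-- Explicit formula for the gradient of the full Hamiltonian. -/
lemma gradFull (Δ ε A N : ℝ) (y : Fin 4 → ℝ) :
    grad4 (fun y => H0fun Δ y + H2fun ε A N y + H4fun A y) y =
    ![4 * (y 1) * (A) * (N) + (-4) * (y 1) * (y 3)^2 * (A) + (-4) * (y 1) * (y 2)^2 * (A) + (-4) * (y 1)^3 * (A) + 2 * (y 0) * (ε) + (-2) * (y 0) * (Δ) + (-4) * (y 0) * (y 3)^2 * (A) + 8 * (y 0) * (y 2) * (y 3) * (A) + 2 * (y 0) * (y 2)^2 * (A) + (-4) * (y 0) * (y 1)^2 * (A) + (-12) * (y 0)^2 * (y 1) * (A) + 2 * (y 0)^3 * (A),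
      2 * (y 1) * (ε) + 2 * (y 1) * (Δ) + 2 * (y 1) * (y 3)^2 * (A) + 8 * (y 1) * (y 2) * (y 3) * (A) + (-4) * (y 1) * (y 2)^2 * (A) + 2 * (y 1)^3 * (A) + 4 * (y 0) * (A) * (N) + (-4) * (y 0) * (y 3)^2 * (A) + (-4) * (y 0) * (y 2)^2 * (A) + (-12) * (y 0) * (y 1)^2 * (A) + (-4) * (y 0)^2 * (y 1) * (A) + (-4) * (y 0)^3 * (A),
      (-4) * (y 3) * (A) * (N) + 4 * (y 3)^3 * (A) + 2 * (y 2) * (ε) + (-2) * (y 2) * (Δ) + (-4) * (y 2) * (y 3)^2 * (A) + 12 * (y 2)^2 * (y 3) * (A) + 2 * (y 2)^3 * (A) + 4 * (y 1)^2 * (y 3) * (A) + (-4) * (y 1)^2 * (y 2) * (A) + (-8) * (y 0) * (y 1) * (y 2) * (A) + 4 * (y 0)^2 * (y 3) * (A) + 2 * (y 0)^2 * (y 2) * (A),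
      2 * (y 3) * (ε) + 2 * (y 3) * (Δ) + 2 * (y 3)^3 * (A) + (-4) * (y 2) * (A) * (N) + 12 * (y 2) * (y 3)^2 * (A) + (-4) * (y 2)^2 * (y 3) * (A) + 4 * (y 2)^3 * (A) + 2 * (y 1)^2 * (y 3) * (A) + 4 * (y 1)^2 * (y 2) * (A) + (-8) * (y 0) * (y 1) * (y 3) * (A) + (-4) * (y 0)^2 * (y 3) * (A) + 4 * (y 0)^2 * (y 2) * (A)] := by
  have h0 := hasFDerivAt_apply (𝕜 := ℝ) (0 : Fin 4) y
  have h1 := hasFDerivAt_apply (𝕜 := ℝ) (1 : Fin 4) y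
  have h2 := hasFDerivAt_apply (𝕜 := ℝ) (2 : Fin 4) y
  have h3 := hasFDerivAt_apply (𝕜 := ℝ) (3 : Fin 4) y
  have hrw : (fun y => H0fun Δ y + H2fun ε A N y + H4fun A y) = fun v : Fin 4 → ℝ =>
      (-Δ * (v 0 * v 0 + v 2 * v 2) + Δ * (v 1 * v 1 + v 3 * v 3))
      + (ε * (v 0 * v 0 + v 2 * v 2 + v 1 * v 1 + v 3 * v 3)
          + 2*A*N * (2 * (v 0 * v 1 - v 2 * v 3)))
      + A * ((1/2) * ((v 0 * v 0 + v 2 * v 2) * (v 0 * v 0 + v 2 * v 2))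
          - 2 * ((v 0 * v 0 + v 2 * v 2) * (v 1 * v 1 + v 3 * v 3))
          + (1/2) * ((v 1 * v 1 + v 3 * v 3) * (v 1 * v 1 + v 3 * v 3))
          - 2 * (v 0 * v 0 + v 2 * v 2 + (v 1 * v 1 + v 3 * v 3))
              * (2 * (v 0 * v 1 - v 2 * v 3))) := by
    funext v; simp only [H0fun, H2fun, H4fun]; ring
  have hP := (h0.mul h0).add (h2.mul h2)
  have hQ := (h1.mul h1).add (h3.mul h3)
  have hW := ((h0.mul h1).sub (h2.mul h3)).const_mul (2 : ℝ)
  have hH4 := ((((hP.mul hP).const_mul ((1:ℝ)/2)).sub ((hP.mul hQ).const_mul (2:ℝ))).add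
      ((hQ.mul hQ).const_mul ((1:ℝ)/2))).sub (((hP.add hQ).const_mul (2:ℝ)).mul hW)
  have hH := (((hP.const_mul (-Δ)).add (hQ.const_mul Δ)).add
      ((((hP.add (h1.mul h1)).add (h3.mul h3)).const_mul ε).add
        (hW.const_mul (2*A*N)))).add (hH4.const_mul A)
  have hfd : fderiv ℝ (fun v : Fin 4 → ℝ =>
      (-Δ * (v 0 * v 0 + v 2 * v 2) + Δ * (v 1 * v 1 + v 3 * v 3))
      + (ε * (v 0 * v 0 + v 2 * v 2 + v 1 * v 1 + v 3 * v 3)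
          + 2*A*N * (2 * (v 0 * v 1 - v 2 * v 3)))
      + A * ((1/2) * ((v 0 * v 0 + v 2 * v 2) * (v 0 * v 0 + v 2 * v 2))
          - 2 * ((v 0 * v 0 + v 2 * v 2) * (v 1 * v 1 + v 3 * v 3))
          + (1/2) * ((v 1 * v 1 + v 3 * v 3) * (v 1 * v 1 + v 3 * v 3))
          - 2 * (v 0 * v 0 + v 2 * v 2 + (v 1 * v 1 + v 3 * v 3))
              * (2 * (v 0 * v 1 - v 2 * v 3)))) y = _ :=
    HasFDerivAt.fderiv hH
  funext i
  show fderiv ℝ (fun y => H0fun Δ y + H2fun ε A N y + H4fun A y) y (Pi.single i 1) = _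
  rw [hrw, hfd]
  fin_cases i <;>
    simp only [ContinuousLinearMap.add_apply, ContinuousLinearMap.coe_smul', Pi.smul_apply,
      ContinuousLinearMap.sub_apply, ContinuousLinearMap.coe_sub', Pi.sub_apply,
      ContinuousLinearMap.proj_apply, smul_eq_mul, Pi.single_apply,
      Matrix.cons_val_zero, Matrix.cons_val_one, Matrix.head_cons,
      Matrix.cons_val_two, Matrix.cons_val_three, Matrix.tail_cons, Matrix.head_fin_const,
      (show ((0:Fin 4) ≠ 1) by decide), (show ((0:Fin 4) ≠ 2) by decide), (show ((0:Fin 4) ≠ 3) by decide), (show ((1:Fin 4) ≠ 0) by decide), (show ((1:Fin 4) ≠ 2) by decide), (show ((1:Fin 4) ≠ 3) by decide), (show ((2:Fin 4) ≠ 0) by decide), (show ((2:Fin 4) ≠ 1) by decide), (show ((2:Fin 4) ≠ 3) by decide), (show ((3:Fin 4) ≠ 0) by decide), (show ((3:Fin 4) ≠ 1) by decide), (show ((3:Fin 4) ≠ 2) by decide)] <;>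
    norm_num [Fin.ext_iff, (show ((0:Fin 4):ℕ) = 0 by decide), (show ((1:Fin 4):ℕ) = 1 by decide), (show ((2:Fin 4):ℕ) = 2 by decide), (show ((3:Fin 4):ℕ) = 3 by decide)] <;> ring

/-- Explicit formula for the gradient of `H₀`. -/
lemma gradH0 (Δ : ℝ) (y : Fin 4 → ℝ) :
    grad4 (H0fun Δ) y = ![-(2*Δ) * y 0, 2*Δ * y 1, -(2*Δ) * y 2, 2*Δ * y 3] := by
  have h0 := hasFDerivAt_apply (𝕜 := ℝ) (0 : Fin 4) y
  have h1 := hasFDerivAt_apply (𝕜 := ℝ) (1 : Fin 4) y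
  have h2 := hasFDerivAt_apply (𝕜 := ℝ) (2 : Fin 4) y
  have h3 := hasFDerivAt_apply (𝕜 := ℝ) (3 : Fin 4) y
  have hrw : H0fun Δ = fun v : Fin 4 → ℝ =>
      -Δ * (v 0 * v 0 + v 2 * v 2) + Δ * (v 1 * v 1 + v 3 * v 3) := by
    funext v; simp only [H0fun]; ring
  have hH := (((h0.mul h0).add (h2.mul h2)).const_mul (-Δ)).add
    (((h1.mul h1).add (h3.mul h3)).const_mul Δ)
  have hfd : fderiv ℝ (fun v : Fin 4 → ℝ =>
      -Δ * (v 0 * v 0 + v 2 * v 2) + Δ * (v 1 * v 1 + v 3 * v 3)) y = _ :=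
    HasFDerivAt.fderiv hH
  funext i
  show fderiv ℝ (H0fun Δ) y (Pi.single i 1) = _
  rw [hrw, hfd]
  fin_cases i <;>
    simp only [ContinuousLinearMap.add_apply, ContinuousLinearMap.coe_smul', Pi.smul_apply,
      ContinuousLinearMap.sub_apply, ContinuousLinearMap.coe_sub', Pi.sub_apply,
      ContinuousLinearMap.proj_apply, smul_eq_mul, Pi.single_apply,
      Matrix.cons_val_zero, Matrix.cons_val_one, Matrix.head_cons,
      Matrix.cons_val_two, Matrix.cons_val_three, Matrix.tail_cons, Matrix.head_fin_const,
      (show ((0:Fin 4) ≠ 1) by decide), (show ((0:Fin 4) ≠ 2) by decide), (show ((0:Fin 4) ≠ 3) by decide), (show ((1:Fin 4) ≠ 0) by decide), (show ((1:Fin 4) ≠ 2) by decide), (show ((1:Fin 4) ≠ 3) by decide), (show ((2:Fin 4) ≠ 0) by decide), (show ((2:Fin 4) ≠ 1) by decide), (show ((2:Fin 4) ≠ 3) by decide), (show ((3:Fin 4) ≠ 0) by decide), (show ((3:Fin 4) ≠ 1) by decide), (show ((3:Fin 4) ≠ 2) by decide)] <;>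
    norm_num [Fin.ext_iff, (show ((0:Fin 4):ℕ) = 0 by decide), (show ((1:Fin 4):ℕ) = 1 by decide), (show ((2:Fin 4):ℕ) = 2 by decide), (show ((3:Fin 4):ℕ) = 3 by decide)] <;> ring

/-- Chow–Kim: a constrained critical point `∇H(y*) = η ∇H₀(y*)` of the truncated
normal form `H = H₀ + H₂ + H₄` gives an exact solution `γ(t) = exp(ηtJS) y*` of
the Hamiltonian system `γ' = J ∇H(γ)`, periodic with period `π/(|η|Δ)` when `η ≠ 0`. -/
theorem chow_kim_relative_periodic_orbit (Δ ε A N : ℝ) (hΔ : 0 < Δ)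
    (ystar : Fin 4 → ℝ) (η : ℝ)
    (hcrit : grad4 (fun y => H0fun Δ y + H2fun ε A N y + H4fun A y) ystar
      = η • grad4 (H0fun Δ) ystar) :
    (∀ t : ℝ,
      HasDerivAt
        (fun s : ℝ => (NormedSpace.exp ((η * s) • (Jmat * Smat Δ))).mulVec ystar)
        (Jmat.mulVec (grad4 (fun y => H0fun Δ y + H2fun ε A N y + H4fun A y)
          ((NormedSpace.exp ((η * t) • (Jmat * Smat Δ))).mulVec ystar))) t) ∧
    (η ≠ 0 →
      Function.Periodic
        (fun s : ℝ => (NormedSpace.exp ((η * s) • (Jmat * Smat Δ))).mulVec ystar)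
        (Real.pi / (|η| * Δ))) := by
  have hΔ' : Δ ≠ 0 := ne_of_gt hΔ
  rw [gradFull, gradH0] at hcrit
  have h0 := congrFun hcrit 0
  have h1 := congrFun hcrit 1
  have h2 := congrFun hcrit 2
  have h3 := congrFun hcrit 3
  simp only [Matrix.cons_val_zero, Matrix.cons_val_one, Matrix.head_cons, Pi.smul_apply,
    smul_eq_mul, Matrix.cons_val_two, Matrix.cons_val_three, Matrix.tail_cons,
    Matrix.head_fin_const] at h0 h1 h2 h3
  constructor
  · intro t
    have hγ : (fun s : ℝ => (NormedSpace.exp ((η * s) • (Jmat * Smat Δ))).mulVec ystar)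
        = fun s : ℝ =>
          ![Real.cos (2*Δ*(η*s)) * ystar 0 - Real.sin (2*Δ*(η*s)) * ystar 2,
            Real.cos (2*Δ*(η*s)) * ystar 1 + Real.sin (2*Δ*(η*s)) * ystar 3,
            Real.sin (2*Δ*(η*s)) * ystar 0 + Real.cos (2*Δ*(η*s)) * ystar 2,
            -(Real.sin (2*Δ*(η*s)) * ystar 1) + Real.cos (2*Δ*(η*s)) * ystar 3] := by
      funext s
      rw [expM Δ hΔ' (η*s), Rvec Δ hΔ']
    rw [hγ, expM Δ hΔ' (η*t), Rvec Δ hΔ', gradFull, Jvec]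
    have hpy := Real.sin_sq_add_cos_sq (2*Δ*(η*t))
    have hinner : HasDerivAt (fun s : ℝ => 2*Δ*(η*s)) (2*Δ*η) t := by
      have hfn : (fun s : ℝ => 2*Δ*(η*s)) = fun s : ℝ => (2*Δ*η) * s := by
        funext s; ring
      rw [hfn]
      simpa using (hasDerivAt_id t).const_mul (2*Δ*η)
    have hc : HasDerivAt (fun s : ℝ => Real.cos (2*Δ*(η*s)))
        (-Real.sin (2*Δ*(η*t)) * (2*Δ*η)) t := by
      simpa [Function.comp_def] using (Real.hasDerivAt_cos (2*Δ*(η*t))).comp t hinner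
    have hs : HasDerivAt (fun s : ℝ => Real.sin (2*Δ*(η*s)))
        (Real.cos (2*Δ*(η*t)) * (2*Δ*η)) t := by
      simpa [Function.comp_def] using (Real.hasDerivAt_sin (2*Δ*(η*t))).comp t hinner
    apply hasDerivAt_pi.mpr
    intro i
    fin_cases i
    · simp only [Fin.zero_eta, Fin.mk_one, Fin.reduceFinMk, Fin.isValue, Matrix.cons_val_zero, Matrix.cons_val_one, Matrix.head_cons, Matrix.cons_val_two, Matrix.cons_val_three, Matrix.tail_cons, Matrix.head_fin_const]
      convert (hc.mul_const (ystar 0)).sub (hs.mul_const (ystar 2)) using 1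
      · rfl
      linear_combination (Real.sin (2*Δ*(η*t))) * h0 + (Real.cos (2*Δ*(η*t))) * h2
        + ((-4) * (Real.sin (2*Δ*(η*t))) * (ystar 1) * (ystar 3)^2 * (A) + (-4) * (Real.sin (2*Δ*(η*t))) * (ystar 1) * (ystar 2)^2 * (A) + (-4) * (Real.sin (2*Δ*(η*t))) * (ystar 1)^3 * (A) + (-4) * (Real.sin (2*Δ*(η*t))) * (ystar 0) * (ystar 3)^2 * (A) + 8 * (Real.sin (2*Δ*(η*t))) * (ystar 0) * (ystar 2) * (ystar 3) * (A) + 2 * (Real.sin (2*Δ*(η*t))) * (ystar 0) * (ystar 2)^2 * (A) + (-4) * (Real.sin (2*Δ*(η*t))) * (ystar 0) * (ystar 1)^2 * (A) + (-12) * (Real.sin (2*Δ*(η*t))) * (ystar 0)^2 * (ystar 1) * (A) + 2 * (Real.sin (2*Δ*(η*t))) * (ystar 0)^3 * (A) + 4 * (Real.cos (2*Δ*(η*t))) * (ystar 3)^3 * (A) + (-4) * (Real.cos (2*Δ*(η*t))) * (ystar 2) * (ystar 3)^2 * (A) + 12 * (Real.cos (2*Δ*(η*t))) * (ystar 2)^2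 * (ystar 3) * (A) + 2 * (Real.cos (2*Δ*(η*t))) * (ystar 2)^3 * (A) + 4 * (Real.cos (2*Δ*(η*t))) * (ystar 1)^2 * (ystar 3) * (A) + (-4) * (Real.cos (2*Δ*(η*t))) * (ystar 1)^2 * (ystar 2) * (A) + (-8) * (Real.cos (2*Δ*(η*t))) * (ystar 0) * (ystar 1) * (ystar 2) * (A) + 4 * (Real.cos (2*Δ*(η*t))) * (ystar 0)^2 * (ystar 3) * (A) + 2 * (Real.cos (2*Δ*(η*t))) * (ystar 0)^2 * (ystar 2) * (A)) * hpy
    · simp only [Fin.zero_eta, Fin.mk_one, Fin.reduceFinMk, Fin.isValue, Matrix.cons_val_zero, Matrix.cons_val_one, Matrix.head_cons, Matrix.cons_val_two, Matrix.cons_val_three, Matrix.tail_cons, Matrix.head_fin_const]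
      convert (hc.mul_const (ystar 1)).add (hs.mul_const (ystar 3)) using 1
      · rfl
      linear_combination (-(Real.sin (2*Δ*(η*t)))) * h1 + (Real.cos (2*Δ*(η*t))) * h3
        + ((-2) * (Real.sin (2*Δ*(η*t))) * (ystar 1) * (ystar 3)^2 * (A) + (-8) * (Real.sin (2*Δ*(η*t))) * (ystar 1) * (ystar 2) * (ystar 3) * (A) + 4 * (Real.sin (2*Δ*(η*t))) * (ystar 1) * (ystar 2)^2 * (A) + (-2) * (Real.sin (2*Δ*(η*t))) * (ystar 1)^3 * (A) + 4 * (Real.sin (2*Δ*(η*t))) * (ystar 0) * (ystar 3)^2 * (A) + 4 * (Real.sin (2*Δ*(η*t))) * (ystar 0) * (ystar 2)^2 * (A) + 12 * (Real.sin (2*Δ*(η*t))) * (ystar 0) * (ystar 1)^2 * (A) + 4 * (Real.sin (2*Δ*(η*t))) * (ystar 0)^2 * (ystar 1) * (A) + 4 * (Real.sin (2*Δ*(η*t))) * (ystar 0)^3 * (A) + 2 * (Real.cos (2*Δ*(η*t))) * (ystar 3)^3 * (A) + 12 * (Real.cos (2*Δ*(η*t))) * (ystar 2) * (ystar 3)^2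 * (A) + (-4) * (Real.cos (2*Δ*(η*t))) * (ystar 2)^2 * (ystar 3) * (A) + 4 * (Real.cos (2*Δ*(η*t))) * (ystar 2)^3 * (A) + 2 * (Real.cos (2*Δ*(η*t))) * (ystar 1)^2 * (ystar 3) * (A) + 4 * (Real.cos (2*Δ*(η*t))) * (ystar 1)^2 * (ystar 2) * (A) + (-8) * (Real.cos (2*Δ*(η*t))) * (ystar 0) * (ystar 1) * (ystar 3) * (A) + (-4) * (Real.cos (2*Δ*(η*t))) * (ystar 0)^2 * (ystar 3) * (A) + 4 * (Real.cos (2*Δ*(η*t))) * (ystar 0)^2 * (ystar 2) * (A)) * hpy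
    · simp only [Fin.zero_eta, Fin.mk_one, Fin.reduceFinMk, Fin.isValue, Matrix.cons_val_zero, Matrix.cons_val_one, Matrix.head_cons, Matrix.cons_val_two, Matrix.cons_val_three, Matrix.tail_cons, Matrix.head_fin_const]
      convert (hs.mul_const (ystar 0)).add (hc.mul_const (ystar 2)) using 1
      · rfl
      linear_combination (-(Real.cos (2*Δ*(η*t)))) * h0 + (Real.sin (2*Δ*(η*t))) * h2
        + (-((-4) * (Real.sin (2*Δ*(η*t))) * (ystar 3)^3 * (A) + 4 * (Real.sin (2*Δ*(η*t))) * (ystar 2) * (ystar 3)^2 * (A) + (-12) * (Real.sin (2*Δ*(η*t))) * (ystar 2)^2 * (ystar 3) * (A) + (-2) * (Real.sin (2*Δ*(η*t))) * (ystar 2)^3 * (A) + (-4) * (Real.sin (2*Δ*(η*t))) * (ystar 1)^2 * (ystar 3) * (A) + 4 * (Real.sin (2*Δ*(η*t))) * (ystar 1)^2 * (ystar 2) * (A) + 8 * (Real.sin (2*Δ*(η*t))) * (ystar 0) * (ystar 1) * (ystar 2) * (A) + (-4) * (Real.sin (2*Δ*(η*t))) * (ystar 0)^2 * (ystar 3)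 * (A) + (-2) * (Real.sin (2*Δ*(η*t))) * (ystar 0)^2 * (ystar 2) * (A) + (-4) * (Real.cos (2*Δ*(η*t))) * (ystar 1) * (ystar 3)^2 * (A) + (-4) * (Real.cos (2*Δ*(η*t))) * (ystar 1) * (ystar 2)^2 * (A) + (-4) * (Real.cos (2*Δ*(η*t))) * (ystar 1)^3 * (A) + (-4) * (Real.cos (2*Δ*(η*t))) * (ystar 0) * (ystar 3)^2 * (A) + 8 * (Real.cos (2*Δ*(η*t))) * (ystar 0) * (ystar 2) * (ystar 3) * (A) + 2 * (Real.cos (2*Δ*(η*t))) * (ystar 0) * (ystar 2)^2 * (A) + (-4) * (Real.cos (2*Δ*(η*t))) * (ystar 0) * (ystar 1)^2 * (A) + (-12) * (Real.cos (2*Δ*(η*t))) * (ystar 0)^2 * (ystar 1) * (A) + 2 * (Real.cos (2*Δ*(η*t))) * (ystar 0)^3 * (A))) * hpy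
    · simp only [Fin.zero_eta, Fin.mk_one, Fin.reduceFinMk, Fin.isValue, Matrix.cons_val_zero, Matrix.cons_val_one, Matrix.head_cons, Matrix.cons_val_two, Matrix.cons_val_three, Matrix.tail_cons, Matrix.head_fin_const]
      convert ((hs.mul_const (ystar 1)).neg).add (hc.mul_const (ystar 3)) using 1
      · rfl
      linear_combination (-(Real.cos (2*Δ*(η*t)))) * h1 + (-(Real.sin (2*Δ*(η*t)))) * h3
        + (-(2 * (Real.sin (2*Δ*(η*t))) * (ystar 3)^3 * (A) + 12 * (Real.sin (2*Δ*(η*t))) * (ystar 2) * (ystar 3)^2 * (A) + (-4) * (Real.sin (2*Δ*(η*t))) * (ystar 2)^2 * (ystar 3) * (A) + 4 * (Real.sin (2*Δ*(η*t))) * (ystar 2)^3 * (A) + 2 * (Real.sin (2*Δ*(η*t))) * (ystar 1)^2 * (ystar 3) * (A) + 4 * (Real.sin (2*Δ*(η*t))) * (ystar 1)^2 * (ystar 2) * (A) + (-8) * (Real.sin (2*Δ*(η*t))) * (ystar 0) * (ystar 1) * (ystar 3) * (A) + (-4) * (Real.sin (2*Δ*(η*t))) * (ystar 0)^2 * (ystar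 3) * (A) + 4 * (Real.sin (2*Δ*(η*t))) * (ystar 0)^2 * (ystar 2) * (A) + 2 * (Real.cos (2*Δ*(η*t))) * (ystar 1) * (ystar 3)^2 * (A) + 8 * (Real.cos (2*Δ*(η*t))) * (ystar 1) * (ystar 2) * (ystar 3) * (A) + (-4) * (Real.cos (2*Δ*(η*t))) * (ystar 1) * (ystar 2)^2 * (A) + 2 * (Real.cos (2*Δ*(η*t))) * (ystar 1)^3 * (A) + (-4) * (Real.cos (2*Δ*(η*t))) * (ystar 0) * (ystar 3)^2 * (A) + (-4) * (Real.cos (2*Δ*(η*t))) * (ystar 0) * (ystar 2)^2 * (A) + (-12) * (Real.cos (2*Δ*(η*t))) * (ystar 0) * (ystar 1)^2 * (A) + (-4) * (Real.cos (2*Δ*(η*t))) * (ystar 0)^2 * (ystar 1) * (A) + (-4) * (Real.cos (2*Δ*(η*t))) * (ystar 0)^3 * (A))) * hpy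
  · intro hη s
    show (NormedSpace.exp ((η * (s + Real.pi / (|η| * Δ))) • (Jmat * Smat Δ))).mulVec ystar
      = (NormedSpace.exp ((η * s) • (Jmat * Smat Δ))).mulVec ystar
    rw [expM Δ hΔ' (η * (s + Real.pi / (|η| * Δ))), expM Δ hΔ' (η * s)]
    rcases lt_or_gt_of_ne hη with h | h
    · have harg : 2*Δ*(η * (s + Real.pi / (|η| * Δ))) = 2*Δ*(η*s) - 2*Real.pi := by
        rw [abs_of_neg h]
        field_simp
        ring
      rw [harg, Real.cos_sub_two_pi, Real.sin_sub_two_pi]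
    · have harg : 2*Δ*(η * (s + Real.pi / (|η| * Δ))) = 2*Δ*(η*s) + 2*Real.pi := by
        rw [abs_of_pos h]
        field_simp
      rw [harg, Real.cos_add_two_pi, Real.sin_add_two_pi]
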